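/- Let F be a nonarchimedean local field and Γ ⊆ PGL₂(F) a discrete subgroup. Then the limit set of Γ acting on P¹(ℂ_p) (via a fixed embedding F ↪ ℂ_p) is contained in P¹(F), where ℂ_p is the completion of an algebraic closure of F. -/

import Mathlib

open Filter Matrix

noncomputable section

/-- The projective general linear group PGL₂ of a field. -/
abbrev PGL2 (K : Type*) [Field K] := GL (Fin 2) K ⧸ Subgroup.center (GL (Fin 2) K)

variable (C : Type*) [Field C] [TopologicalSpace C] [IsTopologicalRing C]

instance : TopologicalSpace (Projectivization C (Fin 2 → C)) :=
  instTopologicalSpaceQuotient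

/-- The action of GL₂(C) on the projective line P¹(C) (Möbius transformations). -/
def pact (g : GL (Fin 2) C) :
    Projectivization C (Fin 2 → C) → Projectivization C (Fin 2 → C) :=
  Projectivization.map (Matrix.GeneralLinearGroup.toLin g).toLinearEquiv.toLinearMap
    (Matrix.GeneralLinearGroup.toLin g).toLinearEquiv.injective

variable {F : Type*} [Field F] (ι : F →+* C)

/-- The set of F-rational points of P¹(C). -/
def rationalPoints : Set (Projectivization C (Fin 2 → C)) :=
  {x | ∃ (v : Fin 2 → F) (h : (fun i => ι (v i)) ≠ 0),
    x = Projectivization.mk C (fun i => ι (v i)) h}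

end

/-! ### Auxiliary lemmas -/

noncomputable section AuxLemmas

open Topology

variable {C : Type*} [NontriviallyNormedField C]

/-- Cross determinant of two vectors in `C²`. -/
def crossDet (u w : Fin 2 → C) : C := u 0 * w 1 - u 1 * w 0

lemma crossDet_smul (a : C) (u w : Fin 2 → C) : crossDet (a • u) w = a * crossDet u w := by
  simp only [crossDet, Pi.smul_apply, smul_eq_mul]; ring

lemma crossDet_self (u : Fin 2 → C) : crossDet u u = 0 := by
  simp only [crossDet]; ring

lemma crossDet_anti (u w : Fin 2 → C) : crossDet u w = - crossDet w u := by
  simp only [crossDet]; ring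

lemma exists_coord_ne {u : Fin 2 → C} (h : u ≠ 0) : u 0 ≠ 0 ∨ u 1 ≠ 0 := by
  by_contra hc
  push_neg at hc
  exact h (funext fun i => by fin_cases i <;> simp [hc.1, hc.2])

lemma collinear_of_crossDet {v w : Fin 2 → C} (hv : v ≠ 0) (hw : w ≠ 0)
    (h : crossDet v w = 0) : ∃ a : Cˣ, a • w = v := by
  have h' : v 0 * w 1 = v 1 * w 0 := by rw [← sub_eq_zero]; exact h
  rcases eq_or_ne (w 0) 0 with h0 | h0
  · have hw1 : w 1 ≠ 0 := (exists_coord_ne hw).resolve_left (not_not_intro h0)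
    have hv0 : v 0 = 0 := by
      have h2 := h'; rw [h0, mul_zero] at h2
      exact (mul_eq_zero.1 h2).resolve_right hw1
    have hv1 : v 1 ≠ 0 := (exists_coord_ne hv).resolve_left (not_not_intro hv0)
    refine ⟨Units.mk0 (v 1 / w 1) (div_ne_zero hv1 hw1), funext fun i => ?_⟩
    fin_cases i <;> simp [Units.smul_def, h0, hv0, div_mul_cancel₀, hw1]
  · have hv0 : v 0 ≠ 0 := by
      intro hv0
      rw [hv0, zero_mul] at h'
      have hv1 : v 1 = 0 :=
        (mul_eq_zero.1 h'.symm).resolve_right h0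
      exact hv (funext fun i => by fin_cases i <;> simp [hv0, hv1])
    refine ⟨Units.mk0 (v 0 / w 0) (div_ne_zero hv0 h0), funext fun i => ?_⟩
    fin_cases i
    · simp [Units.smul_def, div_mul_cancel₀, h0]
    · show (v 0 / w 0) * w 1 = v 1
      rw [div_mul_eq_mul_div, h', mul_div_assoc, div_self h0, mul_one]

lemma tendsto_mk_of_tendsto {f : ℕ → Fin 2 → C} (hf : ∀ n, f n ≠ 0) {v : Fin 2 → C}
    (hv : v ≠ 0) (h : Tendsto f atTop (nhds v)) :
    Tendsto (fun n => Projectivization.mk C (f n) (hf n)) atTop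
      (nhds (Projectivization.mk C v hv)) := by
  letI : Setoid {u : Fin 2 → C // u ≠ 0} := projectivizationSetoid C (Fin 2 → C)
  have h2 : Tendsto (fun n => (⟨f n, hf n⟩ : {u : Fin 2 → C // u ≠ 0})) atTop
      (nhds ⟨v, hv⟩) := tendsto_subtype_rng.2 h
  exact (continuous_quotient_mk'.tendsto _).comp h2

lemma isOpen_mk_image {S : Set {u : Fin 2 → C // u ≠ 0}} (hS : IsOpen S)
    (hsat : ∀ u w : {u : Fin 2 → C // u ≠ 0}, u ∈ S → (∃ a : Cˣ, a • u.1 = w.1) → w ∈ S) :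
    IsOpen ((fun u : {u : Fin 2 → C // u ≠ 0} => Projectivization.mk C u.1 u.2) '' S) := by
  letI : Setoid {u : Fin 2 → C // u ≠ 0} := projectivizationSetoid C (Fin 2 → C)
  have hq : Topology.IsQuotientMap (Quotient.mk' :
      {u : Fin 2 → C // u ≠ 0} → Projectivization C (Fin 2 → C)) := isQuotientMap_quotient_mk'
  refine hq.isOpen_preimage.1 ?_
  have he : (Quotient.mk' : {u : Fin 2 → C // u ≠ 0} → Projectivization C (Fin 2 → C)) ⁻¹'
      ((fun u : {u : Fin 2 → C // u ≠ 0} => Projectivization.mk C u.1 u.2) '' S) = S := by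
    ext u
    constructor
    · rintro ⟨s, hs, heq⟩
      have heq' : Projectivization.mk C s.1 s.2 = Projectivization.mk C u.1 u.2 := heq
      obtain ⟨a, ha⟩ := (Projectivization.mk_eq_mk_iff C _ _ _ _).1 heq'
      exact hsat s u hs ⟨a⁻¹, by rw [← ha, inv_smul_smul]⟩
    · intro hu
      exact ⟨u, hu, rfl⟩
  refine (congrArg IsOpen he).mpr ?_
  exact hS

lemma p1_t2Space : T2Space (Projectivization C (Fin 2 → C)) := by
  constructor
  intro x y hxy
  set v := x.rep with hvd
  set w := y.rep with hwd
  have hv : v ≠ 0 := x.rep_nonzero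
  have hw : w ≠ 0 := y.rep_nonzero
  have hcr : crossDet v w ≠ 0 := by
    intro h
    obtain ⟨a, ha⟩ := collinear_of_crossDet hv hw h
    apply hxy
    rw [← x.mk_rep, ← y.mk_rep]
    exact (Projectivization.mk_eq_mk_iff C _ _ _ _).2 ⟨a, ha⟩
  have hcr' : crossDet w v ≠ 0 := by
    rw [crossDet_anti]; simpa using hcr
  set S₁ : Set {u : Fin 2 → C // u ≠ 0} := {u | ‖crossDet u.1 v‖ < ‖crossDet u.1 w‖} with hS1
  set S₂ : Set {u : Fin 2 → C // u ≠ 0} := {u | ‖crossDet u.1 w‖ < ‖crossDet u.1 v‖} with hS2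
  have hcont : ∀ z : Fin 2 → C, Continuous fun u : {u : Fin 2 → C // u ≠ 0} =>
      ‖crossDet u.1 z‖ := by
    intro z
    apply Continuous.norm
    simp only [crossDet]
    exact ((((continuous_apply 0).comp continuous_subtype_val).mul continuous_const).sub
      (((continuous_apply 1).comp continuous_subtype_val).mul continuous_const))
  have hsat : ∀ (z z' : Fin 2 → C) (u u' : {u : Fin 2 → C // u ≠ 0}),
      ‖crossDet u.1 z‖ < ‖crossDet u.1 z'‖ → (∃ a : Cˣ, a • u.1 = u'.1) →
      ‖crossDet u'.1 z‖ < ‖crossDet u'.1 z'‖ := by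
    rintro z z' u u' hlt ⟨a, ha⟩
    rw [← ha, Units.smul_def, crossDet_smul, crossDet_smul, norm_mul, norm_mul]
    have hapos : (0:ℝ) < ‖(a:C)‖ := norm_pos_iff.2 a.ne_zero
    exact (mul_lt_mul_iff_right₀ hapos).2 hlt
  refine ⟨(fun u : {u : Fin 2 → C // u ≠ 0} => Projectivization.mk C u.1 u.2) '' S₁,
    (fun u : {u : Fin 2 → C // u ≠ 0} => Projectivization.mk C u.1 u.2) '' S₂,
    isOpen_mk_image (isOpen_lt (hcont v) (hcont w)) (fun u u' hu => hsat v w u u' hu),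
    isOpen_mk_image (isOpen_lt (hcont w) (hcont v)) (fun u u' hu => hsat w v u u' hu),
    ⟨⟨v, hv⟩, ?_, x.mk_rep⟩, ⟨⟨w, hw⟩, ?_, y.mk_rep⟩, ?_⟩
  · show ‖crossDet v v‖ < ‖crossDet v w‖
    rw [crossDet_self]; simpa using hcr
  · show ‖crossDet w w‖ < ‖crossDet w v‖
    rw [crossDet_self]; simpa using hcr'
  · rw [Set.disjoint_left]
    rintro z ⟨u1, h1, hz1⟩ ⟨u2, h2, hz2⟩
    rw [← hz2] at hz1
    obtain ⟨a, ha⟩ := (Projectivization.mk_eq_mk_iff C _ _ _ _).1 hz1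
    have h2' : ‖crossDet u1.1 v‖ < ‖crossDet u1.1 w‖ := h1
    have h2'' : ‖crossDet u1.1 w‖ < ‖crossDet u1.1 v‖ := hsat w v u2 u1 h2 ⟨a, ha⟩
    exact lt_asymm h2' h2''

lemma isClosed_rationalPoints {F : Type*} [NontriviallyNormedField F] [CompleteSpace F]
    (ι : F →+* C) (hι : Isometry ι) :
    IsClosed (rationalPoints C ι) := by
  letI : Setoid {u : Fin 2 → C // u ≠ 0} := projectivizationSetoid C (Fin 2 → C)
  have hq : Topology.IsQuotientMap (Quotient.mk' :
      {u : Fin 2 → C // u ≠ 0} → Projectivization C (Fin 2 → C)) := isQuotientMap_quotient_mk'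
  refine hq.isClosed_preimage.1 ?_
  have hrange : IsClosed (Set.range ι) := hι.isClosedEmbedding.isClosed_range
  apply IsSeqClosed.isClosed
  intro f u hmem hconv
  have hvals : Tendsto (fun n => (f n : Fin 2 → C)) atTop (nhds (u : Fin 2 → C)) :=
    tendsto_subtype_rng.1 hconv
  obtain ⟨i, hi⟩ : ∃ i, (u : Fin 2 → C) i ≠ 0 := by
    rcases exists_coord_ne u.2 with h | h
    exacts [⟨0, h⟩, ⟨1, h⟩]
  have hcoord : ∀ j, Tendsto (fun n => (f n : Fin 2 → C) j) atTop (nhds ((u : Fin 2 → C) j)) :=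
    fun j => tendsto_pi_nhds.1 hvals j
  have hevne : ∀ᶠ n in atTop, (f n : Fin 2 → C) i ≠ 0 := (hcoord i).eventually_ne hi
  have hratio : ∀ j, ∀ᶠ n in atTop,
      (f n : Fin 2 → C) j / (f n : Fin 2 → C) i ∈ Set.range ι := by
    intro j
    filter_upwards [hevne] with n hne
    obtain ⟨w, hw, heq⟩ := hmem n
    have heq' : Projectivization.mk C (f n : Fin 2 → C) (f n).2 =
        Projectivization.mk C (fun k => ι (w k)) hw := heq
    obtain ⟨a, ha⟩ := (Projectivization.mk_eq_mk_iff C _ _ _ _).1 heq'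
    have ha' : ∀ k, (f n : Fin 2 → C) k = (a : C) * ι (w k) := by
      intro k
      rw [← ha]; rfl
    have hwi : ι (w i) ≠ 0 := by
      intro h0
      apply hne
      rw [ha' i, h0, mul_zero]
    rw [ha' j, ha' i, mul_div_mul_left _ _ a.ne_zero, ← map_div₀]
    exact ⟨_, rfl⟩
  have hlim : ∀ j, (u : Fin 2 → C) j / (u : Fin 2 → C) i ∈ Set.range ι := by
    intro j
    exact hrange.mem_of_tendsto ((hcoord j).div (hcoord i) hi) (hratio j)
  choose w hwspec using hlim
  refine ⟨w, ?_, ?_⟩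
  · intro h0
    have h1 := congrFun h0 i
    rw [hwspec i, div_self hi] at h1
    simp at h1
  · show Projectivization.mk C (u : Fin 2 → C) u.2 = _
    refine ((Projectivization.mk_eq_mk_iff C _ _ _ _).2 ?_)
    refine ⟨Units.mk0 ((u : Fin 2 → C) i) hi, funext fun k => ?_⟩
    show (u : Fin 2 → C) i * ι (w k) = (u : Fin 2 → C) k
    rw [hwspec k, mul_div_cancel₀ _ hi]

lemma mulVec_ne_zero_of_det {K : Type*} [Field K] {M : Matrix (Fin 2) (Fin 2) K}
    (hM : M.det ≠ 0) {v : Fin 2 → K} (hv : v ≠ 0) : M *ᵥ v ≠ 0 := by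
  intro h
  apply hv
  have hU : IsUnit M.det := isUnit_iff_ne_zero.2 hM
  calc v = (M⁻¹ * M) *ᵥ v := by rw [Matrix.nonsing_inv_mul M hU, Matrix.one_mulVec]
    _ = M⁻¹ *ᵥ (M *ᵥ v) := (Matrix.mulVec_mulVec _ _ _).symm
    _ = 0 := by rw [h, Matrix.mulVec_zero]

lemma det_GL_ne_zero {K : Type*} [Field K] (g : GL (Fin 2) K) :
    (g : Matrix (Fin 2) (Fin 2) K).det ≠ 0 :=
  ((Matrix.isUnit_iff_isUnit_det _).1 g.isUnit).ne_zero

lemma pact_mk {K : Type*} [Field K] [TopologicalSpace K] [IsTopologicalRing K]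
    (g : GL (Fin 2) K) (v : Fin 2 → K) (hv : v ≠ 0) :
    pact K g (Projectivization.mk K v hv) =
      Projectivization.mk K ((g : Matrix (Fin 2) (Fin 2) K) *ᵥ v)
        (mulVec_ne_zero_of_det (det_GL_ne_zero g) hv) := by
  unfold pact
  rw [Projectivization.map_mk]
  rfl

lemma no_conv_subseq {F : Type*} [NontriviallyNormedField F]
    (Γ : Subgroup (PGL2 F)) (hΓ : DiscreteTopology Γ)
    (h : ℕ → GL (Fin 2) F)
    (hmem : ∀ n, (QuotientGroup.mk (h n) : PGL2 F) ∈ Γ)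
    (hdist : ∀ i j, i ≠ j → (QuotientGroup.mk (h i) : PGL2 F) ≠ QuotientGroup.mk (h j))
    (L : GL (Fin 2) F) (hconv : Tendsto h atTop (nhds L)) : False := by
  have hcc : IsClosed ((Subgroup.center (GL (Fin 2) F) : Subgroup _) : Set (GL (Fin 2) F)) := by
    have he : ((Subgroup.center (GL (Fin 2) F)) : Set (GL (Fin 2) F)) =
        ⋂ gg : GL (Fin 2) F, {z | gg * z = z * gg} := by
      ext z
      simp only [Set.mem_iInter, Set.mem_setOf_eq, SetLike.mem_coe, Subgroup.mem_center_iff]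
    rw [he]
    exact isClosed_iInter fun gg =>
      isClosed_eq (continuous_const.mul continuous_id) (continuous_id.mul continuous_const)
  haveI : IsClosed ((Subgroup.center (GL (Fin 2) F)) : Set (GL (Fin 2) F)) := hcc
  haveI : T3Space (PGL2 F) := QuotientGroup.instT3Space _
  have hq : Tendsto (fun n => (QuotientGroup.mk (h n) : PGL2 F)) atTop
      (nhds (QuotientGroup.mk L)) := (continuous_quotient_mk'.tendsto L).comp hconv
  have hL : (QuotientGroup.mk L : PGL2 F) ∈ Γ :=
    (Subgroup.isClosed_of_discrete (H := Γ)).mem_of_tendsto hq (Eventually.of_forall hmem)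
  have hsub : Tendsto (fun n => (⟨_, hmem n⟩ : Γ)) atTop (nhds (⟨_, hL⟩ : Γ)) :=
    tendsto_subtype_rng.2 hq
  rw [nhds_discrete] at hsub
  have hev := tendsto_pure.1 hsub
  obtain ⟨N, hN⟩ := eventually_atTop.1 hev
  have e1 := hN N le_rfl
  have e2 := hN (N + 1) (by omega)
  apply hdist N (N + 1) (by omega)
  exact congrArg Subtype.val (e1.trans e2.symm)

lemma tendsto_GL_of_tendsto {F : Type*} [NontriviallyNormedField F]
    (b : ℕ → GL (Fin 2) F) (A : GL (Fin 2) F)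
    (hconv : Tendsto (fun n => (b n : Matrix (Fin 2) (Fin 2) F)) atTop
      (nhds (A : Matrix (Fin 2) (Fin 2) F))) :
    Tendsto b atTop (nhds A) := by
  rw [Units.isEmbedding_embedProduct.tendsto_nhds_iff]
  have hdetA : (A : Matrix (Fin 2) (Fin 2) F).det ≠ 0 :=
    ((Matrix.isUnit_iff_isUnit_det _).1 A.isUnit).ne_zero
  have hdet : Tendsto (fun n => (b n : Matrix (Fin 2) (Fin 2) F).det) atTop
      (nhds (A : Matrix (Fin 2) (Fin 2) F).det) :=
    ((continuous_id.matrix_det).tendsto _).comp hconv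
  have hadj : Tendsto (fun n => (b n : Matrix (Fin 2) (Fin 2) F).adjugate) atTop
      (nhds (A : Matrix (Fin 2) (Fin 2) F).adjugate) :=
    ((continuous_id.matrix_adjugate).tendsto _).comp hconv
  have hinv : Tendsto (fun n => ((b n : Matrix (Fin 2) (Fin 2) F))⁻¹) atTop
      (nhds ((A : Matrix (Fin 2) (Fin 2) F))⁻¹) := by
    have heq : ∀ M : Matrix (Fin 2) (Fin 2) F, M⁻¹ = M.det⁻¹ • M.adjugate := by
      intro M; rw [Matrix.inv_def, Ring.inverse_eq_inv']
    simp only [heq]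
    exact (hdet.inv₀ hdetA).smul hadj
  simp only [Function.comp_def, Units.embedProduct_apply]
  refine Tendsto.prodMk_nhds hconv ?_
  refine (MulOpposite.continuous_op.tendsto _).comp ?_
  simpa only [Matrix.coe_units_inv] using hinv

lemma vec2_ne {K : Type*} [Field K] {u : Fin 2 → K} (h : u ≠ 0) : u 0 ≠ 0 ∨ u 1 ≠ 0 := by
  by_contra hc
  push_neg at hc
  exact h (funext fun i => by fin_cases i <;> simp [hc.1, hc.2])

lemma ker_rational {F K : Type*} [Field F] [Field K] (ι : F →+* K)
    {A : Matrix (Fin 2) (Fin 2) F} (hA : A ≠ 0) {v : Fin 2 → K} (hv : v ≠ 0)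
    (hker : (A.map ι) *ᵥ v = 0) :
    ∃ (w : Fin 2 → F) (a : Kˣ), w ≠ 0 ∧ (a : K) • (fun i => ι (w i)) = v := by
  have hrow : ∃ i : Fin 2, A i 0 ≠ 0 ∨ A i 1 ≠ 0 := by
    by_contra hc
    push_neg at hc
    apply hA
    ext i j
    fin_cases j
    exacts [(hc i).1, (hc i).2]
  obtain ⟨i, hi⟩ := hrow
  have heq : ι (A i 0) * v 0 + ι (A i 1) * v 1 = 0 := by
    have h2 := congrFun hker i
    simpa [Matrix.mulVec, dotProduct, Fin.sum_univ_two, Matrix.map_apply] using h2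
  rcases hi with h0 | h1
  · have hι0 : ι (A i 0) ≠ 0 := fun h => h0 (ι.injective (by rw [h, map_zero]))
    have hv1 : v 1 ≠ 0 := by
      intro h1
      have h3 : ι (A i 0) * v 0 = 0 := by rw [← heq]; rw [h1, mul_zero, add_zero]
      have hv0 : v 0 = 0 := (mul_eq_zero.1 h3).resolve_left hι0
      exact hv (funext fun k => by fin_cases k <;> simp [hv0, h1])
    refine ⟨![-(A i 1 / A i 0), 1], Units.mk0 (v 1) hv1, ?_, funext fun k => ?_⟩
    · intro hw
      have h4 := congrFun hw 1
      simp at h4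
    · fin_cases k
      · show v 1 * ι (-(A i 1 / A i 0)) = v 0
        rw [map_neg, map_div₀]
        field_simp
        linear_combination -heq
      · show v 1 * ι 1 = v 1
        rw [_root_.map_one, mul_one]
  · have hι1 : ι (A i 1) ≠ 0 := fun h => h1 (ι.injective (by rw [h, map_zero]))
    have hv0 : v 0 ≠ 0 := by
      intro h0
      have h3 : ι (A i 1) * v 1 = 0 := by rw [← heq, h0, mul_zero, zero_add]
      have hv1 : v 1 = 0 := (mul_eq_zero.1 h3).resolve_left hι1
      exact hv (funext fun k => by fin_cases k <;> simp [h0, hv1])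
    refine ⟨![1, -(A i 0 / A i 1)], Units.mk0 (v 0) hv0, ?_, funext fun k => ?_⟩
    · intro hw
      have h4 := congrFun hw 0
      simp at h4
    · fin_cases k
      · show v 0 * ι 1 = v 0
        rw [_root_.map_one, mul_one]
      · show v 0 * ι (-(A i 0 / A i 1)) = v 1
        rw [map_neg, map_div₀]
        field_simp
        linear_combination -heq

lemma image_rational {F K : Type*} [Field F] [Field K] (ι : F →+* K)
    {A : Matrix (Fin 2) (Fin 2) F} (hdet : A.det = 0) {v : Fin 2 → K}
    (hvA : (A.map ι) *ᵥ v ≠ 0) :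
    ∃ (w : Fin 2 → F) (a : Kˣ), w ≠ 0 ∧ (a : K) • (fun i => ι (w i)) = (A.map ι) *ᵥ v := by
  set vA := (A.map ι) *ᵥ v with hvAdef
  have hco : ∀ i, vA i = ι (A i 0) * v 0 + ι (A i 1) * v 1 := by
    intro i
    fin_cases i <;> simp [hvAdef, Matrix.mulVec, dotProduct, Fin.sum_univ_two, Matrix.map_apply]
  have hdet2 : A 0 0 * A 1 1 - A 0 1 * A 1 0 = 0 := by
    rw [← Matrix.det_fin_two]; exact hdet
  by_cases hrow0 : A 0 0 = 0 ∧ A 0 1 = 0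
  · have h0 : vA 0 = 0 := by rw [hco 0, hrow0.1, hrow0.2]; simp
    have h1 : vA 1 ≠ 0 := by
      intro h1
      exact hvA (funext fun k => by fin_cases k <;> simp [h0, h1])
    refine ⟨![0, 1], Units.mk0 (vA 1) h1, ?_, funext fun k => ?_⟩
    · intro hw
      have h4 := congrFun hw 1
      simp at h4
    · fin_cases k
      · show vA 1 * ι 0 = vA 0
        rw [_root_.map_zero, mul_zero, h0]
      · show vA 1 * ι 1 = vA 1
        rw [_root_.map_one, mul_one]
  · have hlam : ∃ lam : F, A 1 0 = lam * A 0 0 ∧ A 1 1 = lam * A 0 1 := by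
      rcases Classical.em (A 0 0 = 0) with h00 | h00
      · have h01 : A 0 1 ≠ 0 := by
          intro h
          exact hrow0 ⟨h00, h⟩
        have h10 : A 1 0 = 0 := by
          have h5 : A 0 1 * A 1 0 = 0 := by linear_combination -hdet2 + A 1 1 * h00
          exact (mul_eq_zero.1 h5).resolve_left h01
        exact ⟨A 1 1 / A 0 1, by rw [h10, h00, mul_zero], by field_simp⟩
      · refine ⟨A 1 0 / A 0 0, by field_simp, ?_⟩
        field_simp
        linear_combination hdet2
    obtain ⟨lam, hl0, hl1⟩ := hlam
    have hrel : vA 1 = ι lam * vA 0 := by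
      rw [hco 0, hco 1, hl0, hl1, _root_.map_mul, _root_.map_mul]
      ring
    have h0 : vA 0 ≠ 0 := by
      intro h0
      have h1 : vA 1 = 0 := by rw [hrel, h0, mul_zero]
      exact hvA (funext fun k => by fin_cases k <;> simp [h0, h1])
    refine ⟨![1, lam], Units.mk0 (vA 0) h0, ?_, funext fun k => ?_⟩
    · intro hw
      have h4 := congrFun hw 0
      simp at h4
    · fin_cases k
      · show vA 0 * ι 1 = vA 0
        rw [_root_.map_one, mul_one]
      · show vA 0 * ι lam = vA 1
        rw [hrel]; ring

end AuxLemmas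

/-- the limit set in P¹(C) of a discrete subgroup of PGL₂(F), for F a
nonarchimedean local field embedded in the completion C of an algebraic closure,
is contained in P¹(F). -/
theorem stmt_9 {F C : Type*} [NontriviallyNormedField F] [CompleteSpace F]
    [LocallyCompactSpace F] [IsUltrametricDist F]
    [NontriviallyNormedField C] [CompleteSpace C] [IsAlgClosed C] [IsUltrametricDist C]
    (ι : F →+* C) (hι : Isometry ι)
    (Γ : Subgroup (PGL2 F)) (hΓ : DiscreteTopology Γ)
    (x : Projectivization C (Fin 2 → C))
    (hx : ∃ (y : Projectivization C (Fin 2 → C)) (γ : ℕ → GL (Fin 2) F),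
      (∀ j, (QuotientGroup.mk (γ j) : PGL2 F) ∈ Γ) ∧
      (∀ i j, i ≠ j →
        (QuotientGroup.mk (γ i) : PGL2 F) ≠ (QuotientGroup.mk (γ j) : PGL2 F)) ∧
      Tendsto (fun j => pact C (Matrix.GeneralLinearGroup.map ι (γ j)) y)
        atTop (nhds x)) :
    x ∈ rationalPoints C ι := by
  classical
  haveI : ProperSpace F := ProperSpace.of_locallyCompactSpace F
  haveI hT2 : T2Space (Projectivization C (Fin 2 → C)) := p1_t2Space
  obtain ⟨y, γ, hmemΓ, hdistΓ, hconv⟩ := hx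
  have hv : y.rep ≠ 0 := y.rep_nonzero
  set v : Fin 2 → C := y.rep with hvdef
  have hy : y = Projectivization.mk C v hv := y.mk_rep.symm
  have hdetγ : ∀ j, ((γ j : Matrix (Fin 2) (Fin 2) F)).det ≠ 0 := fun j => det_GL_ne_zero (γ j)
  -- normalize the matrices
  have hmax : ∀ j, ∃ p : Fin 2 × Fin 2, ∀ q : Fin 2 × Fin 2,
      ‖(γ j : Matrix (Fin 2) (Fin 2) F) q.1 q.2‖ ≤ ‖(γ j : Matrix (Fin 2) (Fin 2) F) p.1 p.2‖ :=
    fun j => Finite.exists_max _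
  choose pm hpm using hmax
  set c : ℕ → F := fun j => (γ j : Matrix (Fin 2) (Fin 2) F) (pm j).1 (pm j).2 with hcdef
  have hcne : ∀ j, c j ≠ 0 := by
    intro j hc0
    apply hdetγ j
    have hz : (γ j : Matrix (Fin 2) (Fin 2) F) = 0 := by
      ext p q
      have h5 := hpm j (p, q)
      rw [show (γ j : Matrix (Fin 2) (Fin 2) F) (pm j).1 (pm j).2 = c j from rfl, hc0] at h5
      simp only [norm_zero] at h5
      exact norm_le_zero_iff.1 h5
    rw [hz]
    simp
  set g : ℕ → Matrix (Fin 2) (Fin 2) F :=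
    fun j => (c j)⁻¹ • (γ j : Matrix (Fin 2) (Fin 2) F) with hgdef
  have hgentry : ∀ j p q, ‖g j p q‖ ≤ 1 := by
    intro j p q
    have h5 := hpm j (p, q)
    have hpos : 0 < ‖c j‖ := norm_pos_iff.2 (hcne j)
    show ‖(c j)⁻¹ * (γ j : Matrix (Fin 2) (Fin 2) F) p q‖ ≤ 1
    rw [norm_mul, norm_inv]
    rw [inv_mul_le_one₀ hpos]
    exact h5
  have hgmax : ∀ j, g j (pm j).1 (pm j).2 = 1 := by
    intro j
    show (c j)⁻¹ * (γ j : Matrix (Fin 2) (Fin 2) F) (pm j).1 (pm j).2 = 1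
    exact inv_mul_cancel₀ (hcne j)
  have hgdet : ∀ j, (g j).det ≠ 0 := by
    intro j
    rw [hgdef]
    simp only [Matrix.det_smul]
    exact mul_ne_zero (pow_ne_zero _ (inv_ne_zero (hcne j))) (hdetγ j)
  -- GL versions of the normalized matrices, with the same classes in PGL₂
  have hgUspec : ∀ j, ∃ u : GL (Fin 2) F, (u : Matrix (Fin 2) (Fin 2) F) = g j ∧
      (QuotientGroup.mk u : PGL2 F) = QuotientGroup.mk (γ j) := by
    intro j
    set m : Matrix (Fin 2) (Fin 2) F :=
      (c j) • (((γ j)⁻¹ : GL (Fin 2) F) : Matrix (Fin 2) (Fin 2) F) with hmdef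
    have hvi : g j * m = 1 := by
      show ((c j)⁻¹ • (γ j : Matrix (Fin 2) (Fin 2) F)) *
        ((c j) • (((γ j)⁻¹ : GL (Fin 2) F) : Matrix (Fin 2) (Fin 2) F)) = 1
      rw [smul_mul_assoc, mul_smul_comm, smul_smul, inv_mul_cancel₀ (hcne j), one_smul,
        Units.mul_inv]
    have hiv : m * g j = 1 := by
      show ((c j) • (((γ j)⁻¹ : GL (Fin 2) F) : Matrix (Fin 2) (Fin 2) F)) *
        ((c j)⁻¹ • (γ j : Matrix (Fin 2) (Fin 2) F)) = 1
      rw [smul_mul_assoc, mul_smul_comm, smul_smul, mul_inv_cancel₀ (hcne j), one_smul,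
        Units.inv_mul]
    refine ⟨⟨g j, m, hvi, hiv⟩, rfl, ?_⟩
    rw [QuotientGroup.eq]
    rw [Subgroup.mem_center_iff]
    intro gg
    have hzval : ((((⟨g j, m, hvi, hiv⟩ : GL (Fin 2) F)⁻¹ : GL (Fin 2) F) :
          Matrix (Fin 2) (Fin 2) F) * ((γ j : GL (Fin 2) F) : Matrix (Fin 2) (Fin 2) F)) =
        (c j) • (1 : Matrix (Fin 2) (Fin 2) F) := by
      show m * (γ j : Matrix (Fin 2) (Fin 2) F) = (c j) • 1
      rw [hmdef, smul_mul_assoc, Units.inv_mul]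
    apply Units.ext
    simp only [Units.val_mul]
    rw [hzval, mul_smul_comm, smul_mul_assoc, mul_one, one_mul]
  choose gU hgUval hgUclass using hgUspec
  have hmem' : ∀ j, (QuotientGroup.mk (gU j) : PGL2 F) ∈ Γ := fun j =>
    (hgUclass j) ▸ hmemΓ j
  -- determinants of the mapped matrices
  have hmapdet : ∀ j, ((g j).map ι).det ≠ 0 := by
    intro j h
    apply hgdet j
    apply ι.injective
    rw [map_zero]
    rw [show ((g j).map ι) = ι.mapMatrix (g j) from rfl, ← RingHom.map_det] at h
    exact h
  have hune : ∀ j, ((g j).map ι) *ᵥ v ≠ 0 := fun j => mulVec_ne_zero_of_det (hmapdet j) hv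
  set u : ℕ → Fin 2 → C := fun j => ((g j).map ι) *ᵥ v with hudef
  -- rewrite the action in terms of the normalized matrices
  have hact : ∀ j, pact C (Matrix.GeneralLinearGroup.map ι (γ j)) y =
      Projectivization.mk C (u j) (hune j) := by
    intro j
    rw [hy, pact_mk]
    apply (Projectivization.mk_eq_mk_iff C _ _ _ _).2
    refine ⟨Units.mk0 (ι (c j)) (fun h => hcne j (ι.injective (by rw [h, map_zero]))), ?_⟩
    show (ι (c j)) • (((g j).map ι) *ᵥ v) =
      ((Matrix.GeneralLinearGroup.map ι (γ j) : GL (Fin 2) C) : Matrix (Fin 2) (Fin 2) C) *ᵥ v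
    have hMeq : (ι (c j)) • ((g j).map ι) =
        ((Matrix.GeneralLinearGroup.map ι (γ j) : GL (Fin 2) C) : Matrix (Fin 2) (Fin 2) C) := by
      ext p q
      show ι (c j) * ι (g j p q) = ι ((γ j : Matrix (Fin 2) (Fin 2) F) p q)
      rw [← _root_.map_mul]
      congr 1
      show c j * ((c j)⁻¹ * (γ j : Matrix (Fin 2) (Fin 2) F) p q) = _
      rw [← mul_assoc, mul_inv_cancel₀ (hcne j), one_mul]
    rw [← Matrix.smul_mulVec, hMeq]
  simp only [hact] at hconv
  -- extract a convergent subsequence of the normalized matrices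
  have hcpt : IsCompact {A : Matrix (Fin 2) (Fin 2) F | ∀ p q, A p q ∈ Metric.closedBall (0:F) 1} := by
    have he : {A : Matrix (Fin 2) (Fin 2) F | ∀ p q, A p q ∈ Metric.closedBall (0:F) 1} =
        Set.univ.pi (fun _ : Fin 2 => Set.univ.pi (fun _ : Fin 2 => Metric.closedBall (0:F) 1)) := by
      ext A
      exact ⟨fun hA p _ q _ => hA p q, fun hA p q => hA p (Set.mem_univ _) q (Set.mem_univ _)⟩
    rw [he]
    exact isCompact_univ_pi fun i => isCompact_univ_pi fun j => isCompact_closedBall 0 1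
  haveI : FirstCountableTopology (Matrix (Fin 2) (Fin 2) F) :=
    inferInstanceAs (FirstCountableTopology (Fin 2 → Fin 2 → F))
  have hginball : ∀ n, g n ∈
      {A : Matrix (Fin 2) (Fin 2) F | ∀ p q, A p q ∈ Metric.closedBall (0:F) 1} := by
    intro n p q
    rw [Metric.mem_closedBall, dist_zero_right]
    exact hgentry n p q
  obtain ⟨A, hAmem, φ, hφ, hconvA⟩ := hcpt.tendsto_subseq hginball
  have hentry : ∀ p q, Tendsto (fun n => g (φ n) p q) atTop (nhds (A p q)) := fun p q =>
    tendsto_pi_nhds.1 (tendsto_pi_nhds.1 hconvA p) q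
  -- A is nonzero
  have hAne : A ≠ 0 := by
    intro h0
    have h4 : ∀ p q : Fin 2, ∀ᶠ n in atTop, ‖g (φ n) p q‖ < 1 := by
      intro p q
      have h5 : Tendsto (fun n => ‖g (φ n) p q‖) atTop (nhds ‖A p q‖) := (hentry p q).norm
      rw [h0] at h5
      simp only [Matrix.zero_apply, norm_zero] at h5
      exact h5.eventually_lt_const one_pos
    have h6 : ∀ᶠ n in atTop, ∀ p q : Fin 2, ‖g (φ n) p q‖ < 1 := by
      filter_upwards [h4 0 0, h4 0 1, h4 1 0, h4 1 1] with n a b cc d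
      intro p q
      fin_cases p <;> fin_cases q <;> assumption
    obtain ⟨n, hn⟩ := h6.exists
    have h7 := hn (pm (φ n)).1 (pm (φ n)).2
    rw [hgmax (φ n)] at h7
    simp at h7
  -- A has determinant zero (via discreteness)
  have hdetA : A.det = 0 := by
    by_contra hAdet
    have hAU : IsUnit A.det := isUnit_iff_ne_zero.2 hAdet
    refine no_conv_subseq Γ hΓ (fun n => gU (φ n)) (fun n => hmem' (φ n)) ?_
      ⟨A, A⁻¹, Matrix.mul_nonsing_inv _ hAU, Matrix.nonsing_inv_mul _ hAU⟩ ?_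
    · intro i j hij
      rw [hgUclass, hgUclass]
      exact hdistΓ (φ i) (φ j) (fun h => hij (hφ.injective h))
    · apply tendsto_GL_of_tendsto
      show Tendsto (fun n => ((gU (φ n) : GL (Fin 2) F) : Matrix (Fin 2) (Fin 2) F)) atTop
        (nhds A)
      simp only [hgUval]
      exact hconvA
  -- convergence of the image vectors
  have hcovA : ∀ (B : Matrix (Fin 2) (Fin 2) F) (i : Fin 2),
      ((B.map ι) *ᵥ v) i = ι (B i 0) * v 0 + ι (B i 1) * v 1 := by
    intro B i
    simp [Matrix.mulVec, dotProduct, Fin.sum_univ_two, Matrix.map_apply]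
  have huconv : Tendsto (fun n => u (φ n)) atTop (nhds ((A.map ι) *ᵥ v)) := by
    rw [tendsto_pi_nhds]
    intro i
    have he1 : ∀ n, u (φ n) i = ι (g (φ n) i 0) * v 0 + ι (g (φ n) i 1) * v 1 := fun n =>
      hcovA (g (φ n)) i
    simp only [he1, hcovA A i]
    exact ((((hι.continuous.tendsto _).comp (hentry i 0)).mul tendsto_const_nhds).add
      (((hι.continuous.tendsto _).comp (hentry i 1)).mul tendsto_const_nhds))
  by_cases hvA : (A.map ι) *ᵥ v = 0
  · -- kernel case : y itself is rational, hence all points of the orbit sequence are rational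
    obtain ⟨w, a, hw, hwv⟩ := ker_rational ι hAne hv hvA
    have hrat : ∀ n, Projectivization.mk C (u n) (hune n) ∈ rationalPoints C ι := by
      intro n
      have hgw : (g n) *ᵥ w ≠ 0 := mulVec_ne_zero_of_det (hgdet n) hw
      have hιgw : (fun i => ι (((g n) *ᵥ w) i)) ≠ 0 := by
        intro h
        apply hgw
        funext i
        apply ι.injective
        rw [Pi.zero_apply, map_zero]
        simpa using congrFun h i
      refine ⟨(g n) *ᵥ w, hιgw, ?_⟩
      have hcomm : ((g n).map ι) *ᵥ (fun i => ι (w i)) = fun i => ι (((g n) *ᵥ w) i) := by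
        funext i
        simp [Matrix.mulVec, dotProduct, Fin.sum_univ_two, Matrix.map_apply,
          _root_.map_add, _root_.map_mul]
      refine (Projectivization.mk_eq_mk_iff C _ _ _ _).2 ⟨a, ?_⟩
      show (a : C) • (fun i => ι (((g n) *ᵥ w) i)) = u n
      calc (a : C) • (fun i => ι (((g n) *ᵥ w) i))
          = (a : C) • (((g n).map ι) *ᵥ (fun i => ι (w i))) := by rw [hcomm]
        _ = ((g n).map ι) *ᵥ ((a : C) • (fun i => ι (w i))) := (Matrix.mulVec_smul _ _ _).symm
        _ = ((g n).map ι) *ᵥ v := by rw [hwv]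
        _ = u n := rfl
    exact (isClosed_rationalPoints ι hι).mem_of_tendsto hconv (Eventually.of_forall hrat)
  · -- image case : x equals the rational point determined by the image of A
    obtain ⟨w, a, hw, hwv⟩ := image_rational ι hdetA hvA
    have hmk : Tendsto (fun n => Projectivization.mk C (u (φ n)) (hune (φ n))) atTop
        (nhds (Projectivization.mk C ((A.map ι) *ᵥ v) hvA)) :=
      tendsto_mk_of_tendsto (fun n => hune (φ n)) hvA huconv
    have hx2 : Tendsto (fun n => Projectivization.mk C (u (φ n)) (hune (φ n))) atTop
        (nhds x) := hconv.comp hφ.tendsto_atTop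
    have hxeq : x = Projectivization.mk C ((A.map ι) *ᵥ v) hvA := tendsto_nhds_unique hx2 hmk
    have hw' : (fun i => ι (w i)) ≠ 0 := by
      intro h
      apply hw
      funext i
      apply ι.injective
      rw [Pi.zero_apply, map_zero]
      simpa using congrFun h i
    refine ⟨w, hw', ?_⟩
    rw [hxeq]
    exact ((Projectivization.mk_eq_mk_iff C _ _ _ _).2 ⟨a, by rw [Units.smul_def]; exact hwv⟩)
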